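/- If i ∈ S and P = query i (query j R C) B is a finite sequential procedure, let P̂ = query j R (b ↦ query i (C b) B). Then for every tuple f⃗ of monotone functions with f_i strict, ⟦P⟧(f⃗) = ⟦P̂⟧(f⃗). -/
import Mathlib


/-- Flat order on ℕ⊥. -/
def fle (x y : WithBot ℕ) : Prop := x = ⊥ ∨ x = y

/-- Monotone w.r.t. the flat order. -/
def Mono (f : WithBot ℕ → WithBot ℕ) : Prop := ∀ x y, fle x y → fle (f x) (f y)

/-- Pointwise flat order on functions. -/
def ple (f g : WithBot ℕ → WithBot ℕ) : Prop := ∀ x, fle (f x) (g x)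

/-- Truncation π_k. -/
def pik (k : ℕ) (x : WithBot ℕ) : WithBot ℕ :=
  WithBot.recBotCoe ⊥ (fun m => if m ≤ k then (m : WithBot ℕ) else ⊥) x

/-- Π_k(f) = π_k ∘ f ∘ π_k. -/
def Pif (k : ℕ) (f : WithBot ℕ → WithBot ℕ) : WithBot ℕ → WithBot ℕ :=
  fun x => pik k (f (pik k x))

/-- Strictification. -/
def strictify (f : WithBot ℕ → WithBot ℕ) : WithBot ℕ → WithBot ℕ :=
  fun x => WithBot.recBotCoe ⊥ (fun m => f (m : WithBot ℕ)) x

inductive Proc (n : ℕ) : Type where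
  | const : WithBot ℕ → Proc n
  | query : Fin n → Proc n → (ℕ → Proc n) → Proc n

inductive FiniteProc {n : ℕ} : Proc n → Prop where
  | const (c) : FiniteProc (Proc.const c)
  | query (i Q B) : FiniteProc Q → (∀ a, FiniteProc (B a)) →
      {a | B a ≠ Proc.const ⊥}.Finite → FiniteProc (Proc.query i Q B)

def denot {n : ℕ} : Proc n → (Fin n → WithBot ℕ → WithBot ℕ) → WithBot ℕ
  | .const c, _ => c
  | .query i Q B, f =>
      WithBot.recBotCoe ⊥ (fun a => denot (B a) f) (f i (denot Q f))

/-- Componentwise-pointwise order on tuples. -/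
def tle {n : ℕ} (f g : Fin n → WithBot ℕ → WithBot ℕ) : Prop := ∀ i, ple (f i) (g i)

/-- Monotone functional. -/
def MonoF {n : ℕ} (F : (Fin n → WithBot ℕ → WithBot ℕ) → WithBot ℕ) : Prop :=
  ∀ f g, tle f g → fle (F f) (F g)

/-- Π⃗_k componentwise. -/
def Pivec {n : ℕ} (k : ℕ) (f : Fin n → WithBot ℕ → WithBot ℕ) :
    Fin n → WithBot ℕ → WithBot ℕ := fun i => Pif k (f i)

open Classical in
/-- Strictify coordinates in S. -/
noncomputable def strictifyS {n : ℕ} (S : Set (Fin n))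
    (f : Fin n → WithBot ℕ → WithBot ℕ) : Fin n → WithBot ℕ → WithBot ℕ :=
  fun i => if i ∈ S then strictify (f i) else f i

/-- F_S = F ∘ strictify_S. -/
noncomputable def FS {n : ℕ} (F : (Fin n → WithBot ℕ → WithBot ℕ) → WithBot ℕ)
    (S : Set (Fin n)) : (Fin n → WithBot ℕ → WithBot ℕ) → WithBot ℕ :=
  fun f => F (strictifyS S f)

def pproj {n : ℕ} (k : ℕ) : Proc n → Proc n
  | .const c => .const (pik k c)
  | .query i Q B =>
      .query i (pproj k Q) (fun a => if a ≤ k then pproj k (B a) else .const ⊥)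

/-- Case 2.3 of Lemma 2.5: if f_i is strict, swapping the inner
query outwards does not change the denotation. -/
theorem stmt17 (n : ℕ) (i j : Fin n) (R : Proc n) (C B : ℕ → Proc n)
    (hP : FiniteProc (Proc.query i (Proc.query j R C) B))
    (f : Fin n → WithBot ℕ → WithBot ℕ) (hf : ∀ a, Mono (f a))
    (hstrict : f i ⊥ = ⊥) :
    denot (Proc.query i (Proc.query j R C) B) f =
      denot (Proc.query j R (fun b => Proc.query i (C b) B)) f := by
  simp only [denot]
  cases h : f j (denot R f) with
  | bot => simp [WithBot.recBotCoe, hstrict]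
  | coe b => simp [WithBot.recBotCoe]
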